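/- There are no real numbers γ1, γ2, γ3 with γ3 < 0 such that a solution of the y-system with ẏi → γi, yi → -∞ for i=1,2 exists; i.e., if ÿ1 + ÿ2 = e^{y3}, ẏ1 → 0, ẏ2 → 0, ẏ3 → γ3 < 0, then it is impossible that y1 + y2 → -∞. -/

import Mathlib

open Real Filter Set intervalIntegral


/-- Impossibility of `γ3 < 0`: if `ÿ1 + ÿ2 = exp(y3)`, `ẏ1 → 0`, `ẏ2 → 0`,
`ẏ3 → γ3 < 0`, then it is impossible that `y1 + y2 → -∞`. -/
theorem bkl_gamma3_neg_impossible (y1 y2 y3 : ℝ → ℝ) (γ3 : ℝ)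
    (hy1 : ContDiff ℝ 2 y1) (hy2 : ContDiff ℝ 2 y2) (hy3 : ContDiff ℝ 2 y3)
    (heq : ∀ t ∈ Set.Ici (0:ℝ),
      deriv (deriv y1) t + deriv (deriv y2) t = Real.exp (y3 t))
    (hd1 : Filter.Tendsto (deriv y1) Filter.atTop (nhds 0))
    (hd2 : Filter.Tendsto (deriv y2) Filter.atTop (nhds 0))
    (hd3 : Filter.Tendsto (deriv y3) Filter.atTop (nhds γ3))
    (hγ3 : γ3 < 0)
    (hbot : Filter.Tendsto (fun t => y1 t + y2 t) Filter.atTop Filter.atBot) :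
    False := by
  -- basic regularity
  have hy1d : ContDiff ℝ 1 (deriv y1) := by
    have h2 : ContDiff ℝ ((1:ℕ∞)+1) y1 := by exact_mod_cast hy1
    exact (contDiff_succ_iff_deriv.mp h2).2.2
  have hy2d : ContDiff ℝ 1 (deriv y2) := by
    have h2 : ContDiff ℝ ((1:ℕ∞)+1) y2 := by exact_mod_cast hy2
    exact (contDiff_succ_iff_deriv.mp h2).2.2
  have hy3diff : Differentiable ℝ y3 := hy3.differentiable (by norm_num)
  have hy1diff : Differentiable ℝ y1 := hy1.differentiable (by norm_num)
  have hy2diff : Differentiable ℝ y2 := hy2.differentiable (by norm_num)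
  set c : ℝ := γ3 / 2 with hc_def
  have hc : c < 0 := by simp [hc_def]; linarith
  -- choose T ≥ 0 with deriv y3 t < c for t ≥ T
  have hev : ∀ᶠ t in atTop, deriv y3 t < c := hd3.eventually (gt_mem_nhds (by linarith))
  obtain ⟨T0, hT0⟩ := hev.exists_forall_of_atTop
  set T : ℝ := max T0 0 with hT_def
  have hT0le : (0:ℝ) ≤ T := le_max_right _ _
  -- Step 1: y3 t ≤ y3 T + c * (t - T) for t ≥ T
  have hy3bound : ∀ t ∈ Ici T, y3 t ≤ y3 T + c * (t - T) := by
    have hanti : AntitoneOn (fun t => y3 t - c * t) (Ici T) := by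
      apply antitoneOn_of_deriv_nonpos (convex_Ici T)
      · exact (hy3.continuous.sub (continuous_const.mul continuous_id)).continuousOn
      · intro t ht
        exact ((hy3diff t).sub ((differentiable_id.const_mul c) t)).differentiableWithinAt
      · intro t ht
        rw [interior_Ici] at ht
        have hder : HasDerivAt (fun t => y3 t - c * t) (deriv y3 t - c) t := by
          exact ((hy3diff t).hasDerivAt.sub ((hasDerivAt_id' t).const_mul c)).congr_deriv (by ring)
        rw [hder.deriv]
        have : deriv y3 t < c := hT0 t (le_trans (le_max_left _ _) ht.le)
        linarith
    intro t ht
    have := hanti (self_mem_Ici) ht ht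
    simp only at this
    nlinarith [this]
  -- A and exp bound
  set A : ℝ := Real.exp (y3 T - c * T) with hA_def
  have hApos : 0 < A := Real.exp_pos _
  have hexpbound : ∀ t ∈ Ici T, Real.exp (y3 t) ≤ A * Real.exp (c * t) := by
    intro t ht
    rw [hA_def, ← Real.exp_add]
    exact Real.exp_le_exp.mpr (by have := hy3bound t ht; linarith [this])
  -- v := ẏ1 + ẏ2
  set v : ℝ → ℝ := fun t => deriv y1 t + deriv y2 t with hv_def
  have hvcont : Continuous v := (hy1d.continuous).add (hy2d.continuous)
  have hvtend : Tendsto v atTop (nhds 0) := by simpa using hd1.add hd2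
  have hvderiv : ∀ t ∈ Ici (0:ℝ), HasDerivAt v (Real.exp (y3 t)) t := by
    intro t ht
    have h1 : HasDerivAt (deriv y1) (deriv (deriv y1) t) t :=
      ((hy1d.differentiable (by norm_num)) t).hasDerivAt
    have h2 : HasDerivAt (deriv y2) (deriv (deriv y2) t) t :=
      ((hy2d.differentiable (by norm_num)) t).hasDerivAt
    have := h1.add h2
    rwa [heq t ht] at this
  -- primitive of A * exp (c τ)
  have hprim : ∀ (K t s : ℝ), t ≤ s →
      ∫ τ in t..s, K * Real.exp (c * τ) = K / c * (Real.exp (c * s) - Real.exp (c * t)) := by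
    intro K t s hts
    have : ∀ τ ∈ uIcc t s, HasDerivAt (fun τ => K / c * Real.exp (c * τ)) (K * Real.exp (c * τ)) τ := by
      intro τ _
      have h : HasDerivAt (fun τ => K / c * Real.exp (c * τ)) (K / c * (Real.exp (c * τ) * (c * 1))) τ := (((hasDerivAt_id τ).const_mul c).exp).const_mul (K / c)
      have hne : c ≠ 0 := ne_of_lt hc
      convert h using 1
      rw [mul_one, mul_comm (Real.exp _) c, ← mul_assoc, div_mul_cancel₀ K hne]
    have hint : IntervalIntegrable (fun τ => K * Real.exp (c * τ)) MeasureTheory.volume t s :=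
      (continuous_const.mul (Real.continuous_exp.comp (continuous_const.mul continuous_id))).intervalIntegrable _ _
    rw [intervalIntegral.integral_eq_sub_of_hasDerivAt this hint]
    ring
  -- Step 2: for s ≥ t ≥ T, v s - v t ≤ (A / (-c)) * exp (c * t)
  set M : ℝ := A / (-c) with hM_def
  have hMpos : 0 < M := div_pos hApos (by linarith)
  have hstep2 : ∀ t ∈ Ici T, ∀ s, t ≤ s → v s - v t ≤ M * Real.exp (c * t) := by
    intro t ht s hts
    have hvint : ∀ τ ∈ uIcc t s, HasDerivAt v (Real.exp (y3 τ)) τ := by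
      intro τ hτ
      rw [uIcc_of_le hts] at hτ
      exact hvderiv τ (le_trans (le_trans hT0le ht) hτ.1)
    have hintg : IntervalIntegrable (fun τ => Real.exp (y3 τ)) MeasureTheory.volume t s :=
      (Real.continuous_exp.comp hy3.continuous).intervalIntegrable _ _
    have heqint : v s - v t = ∫ τ in t..s, Real.exp (y3 τ) :=
      (intervalIntegral.integral_eq_sub_of_hasDerivAt hvint hintg).symm
    have hmono : (∫ τ in t..s, Real.exp (y3 τ)) ≤ ∫ τ in t..s, A * Real.exp (c * τ) := by
      apply intervalIntegral.integral_mono_on hts hintg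
      · exact (continuous_const.mul (Real.continuous_exp.comp (continuous_const.mul continuous_id))).intervalIntegrable _ _
      · intro τ hτ
        exact hexpbound τ (le_trans ht hτ.1)
    rw [heqint]
    calc (∫ τ in t..s, Real.exp (y3 τ)) ≤ A / c * (Real.exp (c * s) - Real.exp (c * t)) := by
          rw [← hprim A t s hts]; exact hmono
      _ ≤ M * Real.exp (c * t) := by
          rw [hM_def, div_neg]
          have hAc : A / c < 0 := div_neg_of_pos_of_neg hApos hc
          nlinarith [Real.exp_pos (c * s), Real.exp_pos (c * t)]
  -- lower bound on v
  have hvlow : ∀ t ∈ Ici T, -(M * Real.exp (c * t)) ≤ v t := by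
    intro t ht
    have hlim : Tendsto (fun s => v s - v t) atTop (nhds (0 - v t)) := hvtend.sub_const _
    have hle : 0 - v t ≤ M * Real.exp (c * t) :=
      le_of_tendsto hlim (eventually_atTop.mpr ⟨t, fun s hs => hstep2 t ht s hs⟩)
    linarith
  -- Step 3: u is bounded below on [T, ∞)
  set u : ℝ → ℝ := fun t => y1 t + y2 t with hu_def
  set L : ℝ := u T + (M / c) * Real.exp (c * T) with hL_def
  have hulow : ∀ s, T ≤ s → L ≤ u s := by
    intro s hs
    have huderiv : ∀ τ ∈ uIcc T s, HasDerivAt u (v τ) τ := by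
      intro τ _
      exact ((hy1diff τ).hasDerivAt).add ((hy2diff τ).hasDerivAt)
    have hvint : IntervalIntegrable v MeasureTheory.volume T s := hvcont.intervalIntegrable _ _
    have heqint : u s - u T = ∫ τ in T..s, v τ :=
      (intervalIntegral.integral_eq_sub_of_hasDerivAt huderiv hvint).symm
    have hmono : (∫ τ in T..s, -(M * Real.exp (c * τ))) ≤ ∫ τ in T..s, v τ := by
      apply intervalIntegral.integral_mono_on hs
      · exact ((continuous_const.mul (Real.continuous_exp.comp
          (continuous_const.mul continuous_id))).neg).intervalIntegrable _ _
      · exact hvint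
      · intro τ hτ
        exact hvlow τ hτ.1
    have hval : (∫ τ in T..s, -(M * Real.exp (c * τ)))
        = -(M / c * (Real.exp (c * s) - Real.exp (c * T))) := by
      rw [intervalIntegral.integral_neg, hprim M T s hs]
    have hMc : M / c < 0 := div_neg_of_pos_of_neg hMpos hc
    have h1 : Real.exp (c * s) > 0 := Real.exp_pos _
    rw [hval] at hmono
    rw [hL_def]
    have key : M / c * Real.exp (c * T) ≤ -(M / c * (Real.exp (c * s) - Real.exp (c * T))) := by
      nlinarith [mul_neg_of_neg_of_pos hMc h1]
    rw [← heqint] at hmono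
    linarith [hmono, key]
  -- contradiction
  have := (hbot.eventually (eventually_lt_atBot (L - 1))).and (eventually_ge_atTop T)
  obtain ⟨s, hs1, hs2⟩ := this.exists
  have h := hulow s hs2
  simp only [hu_def] at h hs1
  linarith
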